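/- Let H be self-adjoint, χ bounded self-adjoint with χD(H) ⊆ D(H), and suppose ‖[H,χ]uₙ‖ ≤ (C/m)(‖(H−λ)uₙ‖ + ‖uₙ‖) for an orthonormal sequence (uₙ) with ‖(H−λ)uₙ‖ → 0, where χ = χ_m depends on a parameter m. If moreover ‖(H−λ)v‖ ≥ δ‖v‖ for all v in the range of (1−χ_m) intersected with D(H), then for every ε > 0 there exist m and N such that ‖(1−χ_m)uₙ‖ < ε for all n > N. -/

import Mathlib

open Filter Topology

/-- If `(uₙ)` is an orthonormal Weyl sequence for `λ`, the cutoffs `χ_m` are self-adjoint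
contractions with commutator bound `‖[H,χ_m]uₙ‖ ≤ (C/m)(‖(H−λ)uₙ‖ + ‖uₙ‖)`, and
`‖(H−λ)v‖ ≥ δ‖v‖` for every `v` in the range of `1−χ_m`, then for every `ε > 0` there exist
`m` and `N` with `‖(1−χ_m)uₙ‖ < ε` for all `n > N`. -/
theorem stmt_18 {E : Type*} [NormedAddCommGroup E] [InnerProductSpace ℂ E] [CompleteSpace E]
    (H : E →L[ℂ] E) (hH : IsSelfAdjoint H) (lam δ C : ℝ) (hδ : 0 < δ) (hC : 0 < C)
    (u : ℕ → E) (hu : Orthonormal ℂ u)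
    (hweyl : Tendsto (fun n => ‖H (u n) - (lam : ℂ) • u n‖) atTop (𝓝 0))
    (χ : ℕ → E →L[ℂ] E)
    (hχsa : ∀ m, IsSelfAdjoint (χ m))
    (hχcontr : ∀ m (v : E), ‖χ m v‖ ≤ ‖v‖)
    (hcomm : ∀ m : ℕ, 0 < m → ∀ n : ℕ,
      ‖H (χ m (u n)) - χ m (H (u n))‖
        ≤ (C / m) * (‖H (u n) - (lam : ℂ) • u n‖ + ‖u n‖))
    (hlow : ∀ m : ℕ, ∀ w : E,
      δ * ‖w - χ m w‖ ≤ ‖H (w - χ m w) - (lam : ℂ) • (w - χ m w)‖) :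
    ∀ ε : ℝ, 0 < ε → ∃ m N : ℕ, ∀ n > N, ‖u n - χ m (u n)‖ < ε := by
  intro ε hε
  have hδε : 0 < δ * ε := mul_pos hδ hε
  set m : ℕ := ⌈2 * C / (δ * ε)⌉₊ + 1 with hm
  have hmpos : 0 < m := Nat.succ_pos _
  have hmR : (0 : ℝ) < (m : ℝ) := by exact_mod_cast hmpos
  have hmgt : 2 * C / (δ * ε) < (m : ℝ) := by
    calc 2 * C / (δ * ε) ≤ (⌈2 * C / (δ * ε)⌉₊ : ℝ) := Nat.le_ceil _
    _ < (m : ℝ) := by exact_mod_cast Nat.lt_succ_self _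
  set k : ℝ := C / m with hk
  have hkpos : 0 < k := div_pos hC hmR
  have hklt : k < δ * ε / 2 := by
    rw [hk, div_lt_div_iff₀ hmR (by norm_num : (0:ℝ) < 2)]
    have := (div_lt_iff₀ hδε).mp hmgt
    nlinarith
  set η : ℝ := (δ * ε - k) / (2 + k) with hη
  have hηpos : 0 < η := div_pos (by linarith) (by linarith)
  obtain ⟨N, hN⟩ := (Metric.tendsto_atTop.mp hweyl) η hηpos
  refine ⟨m, N, fun n hn => ?_⟩
  have han : ‖H (u n) - (lam : ℂ) • u n‖ < η := by
    have := hN n (le_of_lt hn)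
    rwa [Real.dist_eq, abs_sub_comm, abs_of_nonpos (by simp [norm_nonneg]), neg_sub,
      sub_zero] at this
  set w := u n with hw
  set a := ‖H w - (lam : ℂ) • w‖ with ha
  have ha0 : 0 ≤ a := norm_nonneg _
  have hnorm1 : ‖w‖ = 1 := hu.1 n
  -- key identity
  have hid : H (w - χ m w) - (lam : ℂ) • (w - χ m w)
      = ((H w - (lam : ℂ) • w) - χ m (H w - (lam : ℂ) • w))
        + (χ m (H w) - H (χ m w)) := by
    simp only [map_sub, map_smul, smul_sub]
    abel
  have hbound : ‖H (w - χ m w) - (lam : ℂ) • (w - χ m w)‖ ≤ 2 * a + k * (a + 1) := by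
    rw [hid]
    refine le_trans (norm_add_le _ _) ?_
    have h1 : ‖(H w - (lam : ℂ) • w) - χ m (H w - (lam : ℂ) • w)‖ ≤ 2 * a := by
      refine le_trans (norm_sub_le _ _) ?_
      have := hχcontr m (H w - (lam : ℂ) • w)
      linarith
    have h2 : ‖χ m (H w) - H (χ m w)‖ ≤ k * (a + 1) := by
      rw [norm_sub_rev]
      have := hcomm m hmpos n
      rw [← hw, ← ha, hnorm1] at this
      exact this
    linarith
  have hlow' := hlow m w
  have hfinal : δ * ‖w - χ m w‖ < δ * ε := by
    have : δ * ‖w - χ m w‖ ≤ (2 + k) * a + k := by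
      refine le_trans hlow' (le_trans hbound ?_); ring_nf; linarith
    have h2 : (2 + k) * a + k < (2 + k) * η + k := by
      have := (mul_lt_mul_iff_right₀ (by linarith : (0:ℝ) < 2 + k)).mpr han
      linarith
    have h3 : (2 + k) * η + k = δ * ε := by
      rw [hη]; field_simp; ring
    linarith
  exact lt_of_mul_lt_mul_left (by linarith) (le_of_lt hδ)
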